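/- arXiv:math/0610944 — 4 statements merged into one kernel-verified Lean document; each statement's English description precedes it below -/
import Mathlib

section
/- Let G := ℚ_p × (ℚ_p/ℤ_p), q : ℚ_p → ℚ_p/ℤ_p the quotient map, and β(x,y) := (p⁻¹x, y + q(p⁻¹x)). For x = Σ_{k≥0} a_k p^k ∈ ℤ_p with digits a_k ∈ {0,…,p-1}, and each n ∈ ℕ, one has β^n(x,0) = (p^{-n} x, Σ_{k=1}^{n} (Σ_{j=0}^{n-k} a_j) p^{-k} + ℤ_p). -/
/-- The ring of `p`-adic integers viewed as an additive subgroup of `ℚ_[p]`. -/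
noncomputable def padicIntSubgroup (p : ℕ) [Fact p.Prime] : AddSubgroup ℚ_[p] where
  carrier := {x : ℚ_[p] | ‖x‖ ≤ 1}
  zero_mem' := by simp
  add_mem' := fun {a b} ha hb =>
    le_trans (Padic.nonarchimedean a b) (max_le ha hb)
  neg_mem' := fun {a} ha => by simpa using ha

section aux

variable {p : ℕ} [Fact p.Prime]

lemma aux_norm_le (a : ℕ → ℕ) (k : ℕ) : ‖(a k : ℚ_[p]) * (p : ℚ_[p]) ^ k‖ ≤ ((p : ℝ)⁻¹) ^ k := by
  rw [norm_mul, norm_pow, Padic.norm_p]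
  calc ‖((a k : ℤ) : ℚ_[p])‖ * ((p:ℝ)⁻¹) ^ k ≤ 1 * ((p:ℝ)⁻¹)^k := by
        apply mul_le_mul_of_nonneg_right (Padic.norm_int_le_one _)
        positivity
    _ = ((p:ℝ)⁻¹)^k := one_mul _

lemma aux_summable (a : ℕ → ℕ) : Summable (fun k => (a k : ℚ_[p]) * (p : ℚ_[p]) ^ k) := by
  apply Summable.of_norm_bounded ?_ (aux_norm_le a)
  apply summable_geometric_of_lt_one (by positivity)
  rw [inv_lt_one_iff₀]
  right
  exact_mod_cast (Fact.out : p.Prime).one_lt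

lemma aux_norm_tsum_le (a : ℕ → ℕ) : ‖∑' k : ℕ, (a k : ℚ_[p]) * (p : ℚ_[p]) ^ k‖ ≤ 1 := by
  have h := (aux_summable (p := p) a).hasSum.tendsto_sum_nat
  have hcont : Filter.Tendsto (fun n => ‖∑ k ∈ Finset.range n, (a k : ℚ_[p]) * (p : ℚ_[p]) ^ k‖)
      Filter.atTop (nhds ‖∑' k : ℕ, (a k : ℚ_[p]) * (p : ℚ_[p]) ^ k‖) :=
    (continuous_norm.tendsto _).comp h
  apply le_of_tendsto hcont
  filter_upwards with n
  induction n with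
  | zero => simp
  | succ m ih =>
      rw [Finset.sum_range_succ]
      refine le_trans (Padic.nonarchimedean _ _) (max_le ih ?_)
      calc ‖(a m : ℚ_[p]) * (p : ℚ_[p]) ^ m‖ ≤ ((p : ℝ)⁻¹) ^ m := aux_norm_le a m
        _ ≤ 1 ^ m := by
            apply pow_le_pow_left₀ (by positivity)
            rw [inv_le_one_iff₀]; right
            exact_mod_cast (Fact.out : p.Prime).one_le
        _ = 1 := one_pow m

/-- Tail decomposition: `x = ∑_{j<m} a_j p^j + p^m t` with `‖t‖ ≤ 1`. -/
lemma aux_tail (a : ℕ → ℕ) (m : ℕ) :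
    ∃ t : ℚ_[p], ‖t‖ ≤ 1 ∧
      (∑' k : ℕ, (a k : ℚ_[p]) * (p : ℚ_[p]) ^ k) =
        (∑ j ∈ Finset.range m, (a j : ℚ_[p]) * (p : ℚ_[p]) ^ j) + (p : ℚ_[p]) ^ m * t := by
  refine ⟨∑' k : ℕ, (a (k + m) : ℚ_[p]) * (p : ℚ_[p]) ^ k, aux_norm_tsum_le _, ?_⟩
  have h := Summable.sum_add_tsum_nat_add (f := fun k => (a k : ℚ_[p]) * (p : ℚ_[p]) ^ k) m
    (aux_summable a)
  rw [← h]
  congr 1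
  rw [← tsum_mul_left]
  congr 1
  ext k
  ring

end aux

/-- Let `G := ℚ_p × (ℚ_p/ℤ_p)`, `q : ℚ_p → ℚ_p/ℤ_p` the quotient
map, and `β(x,y) := (p⁻¹x, y + q(p⁻¹x))`. For `x = Σ_{k≥0} a_k p^k ∈ ℤ_p` with
digits `a_k ∈ {0,…,p-1}` and each `n ∈ ℕ`,
`β^n(x,0) = (p^{-n} x, Σ_{k=1}^{n} (Σ_{j=0}^{n-k} a_j) p^{-k} + ℤ_p)`. -/
theorem stmt8 (p : ℕ) [Fact p.Prime]
    (q : ℚ_[p] →+ ℚ_[p] ⧸ padicIntSubgroup p)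
    (hq : q = QuotientAddGroup.mk' (padicIntSubgroup p))
    (β : ℚ_[p] × (ℚ_[p] ⧸ padicIntSubgroup p) → ℚ_[p] × (ℚ_[p] ⧸ padicIntSubgroup p))
    (hβ : ∀ z, β z = ((p : ℚ_[p])⁻¹ * z.1, z.2 + q ((p : ℚ_[p])⁻¹ * z.1)))
    (a : ℕ → ℕ) (ha : ∀ k, a k < p)
    (x : ℚ_[p]) (hx : x = ∑' k : ℕ, (a k : ℚ_[p]) * (p : ℚ_[p]) ^ k) :
    ∀ n : ℕ, β^[n] (x, 0) =
      ((p : ℚ_[p]) ^ (-(n : ℤ)) * x,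
        q (∑ k ∈ Finset.Icc 1 n,
            (∑ j ∈ Finset.range (n - k + 1), (a j : ℚ_[p])) *
              (p : ℚ_[p]) ^ (-(k : ℤ)))) := by
  have hP : (p : ℚ_[p]) ≠ 0 := Nat.cast_ne_zero.mpr (Fact.out : p.Prime).ne_zero
  set P : ℚ_[p] := (p : ℚ_[p]) with hPdef
  -- key finite sum identity
  have key : ∀ n : ℕ,
      (∑ k ∈ Finset.Icc 1 (n+1),
        (∑ j ∈ Finset.range (n+1 - k + 1), (a j : ℚ_[p])) * P ^ (-(k : ℤ)))
      = (∑ k ∈ Finset.Icc 1 n,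
          (∑ j ∈ Finset.range (n - k + 1), (a j : ℚ_[p])) * P ^ (-(k : ℤ)))
        + P ^ (-((n:ℤ)+1)) * ∑ j ∈ Finset.range (n+1), (a j : ℚ_[p]) * P ^ j := by
    intro n
    have icc : ∀ m : ℕ, ∀ f : ℕ → ℚ_[p],
        ∑ k ∈ Finset.Icc 1 m, f k = ∑ i ∈ Finset.range m, f (1 + i) := by
      intro m f
      rw [← Finset.Ico_add_one_right_eq_Icc, Finset.sum_Ico_eq_sum_range]
      simp
    rw [icc, icc]
    simp only [Nat.cast_add, Nat.cast_one]
    -- rewrite RHS tail via reflection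
    have refl : P ^ (-((n:ℤ)+1)) * ∑ j ∈ Finset.range (n+1), (a j : ℚ_[p]) * P ^ j
        = ∑ i ∈ Finset.range (n+1), (a (n - i) : ℚ_[p]) * P ^ (-(1 + (i:ℤ))) := by
      rw [← Finset.sum_range_reflect (fun j => (a j : ℚ_[p]) * P ^ j) (n+1), Finset.mul_sum]
      apply Finset.sum_congr rfl
      intro i hi
      have hi' : i ≤ n := Nat.lt_succ_iff.mp (Finset.mem_range.mp hi)
      have : n + 1 - 1 - i = n - i := by omega
      rw [this]
      have hexp : P ^ (n - i) = P ^ ((n - i : ℕ) : ℤ) := (zpow_natCast P _).symm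
      rw [hexp, mul_comm (P ^ (-((n:ℤ)+1))), mul_assoc, ← zpow_add₀ hP]
      congr 2
      omega
    rw [refl]
    -- extend first RHS sum to range (n+1)
    have ext0 : ∑ i ∈ Finset.range n,
          (∑ j ∈ Finset.range (n - (1+i) + 1), (a j : ℚ_[p])) * P ^ (-(1 + (i:ℤ)))
        = ∑ i ∈ Finset.range (n+1),
          (∑ j ∈ Finset.range (n - i), (a j : ℚ_[p])) * P ^ (-(1 + (i:ℤ))) := by
      rw [Finset.sum_range_succ]
      have : n - n = 0 := by omega
      rw [this]
      simp only [Finset.range_zero, Finset.sum_empty, zero_mul, add_zero]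
      apply Finset.sum_congr rfl
      intro i hi
      have hi' : i < n := Finset.mem_range.mp hi
      have : n - (1 + i) + 1 = n - i := by omega
      rw [this]
    rw [ext0, ← Finset.sum_add_distrib]
    apply Finset.sum_congr rfl
    intro i hi
    have hi' : i ≤ n := Nat.lt_succ_iff.mp (Finset.mem_range.mp hi)
    have h1 : n + 1 - (1 + i) + 1 = (n - i) + 1 := by omega
    rw [h1, Finset.sum_range_succ, add_mul]
  -- tail lemma
  choose t htle htx using fun m => aux_tail (p := p) a m
  -- main induction
  intro n
  induction n with
  | zero =>
      simp [Function.iterate_zero]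
  | succ n ih =>
      rw [Function.iterate_succ_apply', ih, hβ]
      have hfst : P⁻¹ * (P ^ (-(n:ℤ)) * x) = P ^ (-((n:ℕ)+1:ℕ):ℤ) * x := by
        rw [← mul_assoc, ← zpow_neg_one, ← zpow_add₀ hP]
        congr 2
        push_cast
        ring
      simp only [hfst]
      refine Prod.ext rfl ?_
      simp only
      rw [← map_add]
      have hxm := htx (n+1)
      have hexp : (-(((n:ℕ)+1:ℕ):ℤ)) = -((n:ℤ)+1) := by push_cast; ring
      have hsplit : (∑ k ∈ Finset.Icc 1 n,
            (∑ j ∈ Finset.range (n - k + 1), (a j : ℚ_[p])) * P ^ (-(k : ℤ)))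
          + P ^ (-(((n:ℕ)+1:ℕ):ℤ)) * x
          = (∑ k ∈ Finset.Icc 1 (n+1),
            (∑ j ∈ Finset.range (n+1 - k + 1), (a j : ℚ_[p])) * P ^ (-(k : ℤ)))
            + t (n+1) := by
        rw [key n, hexp, hx, hxm, mul_add, ← zpow_natCast P (n+1)]
        rw [← mul_assoc, ← zpow_add₀ hP]
        have : -((n:ℤ)+1) + ((n:ℕ)+1:ℕ) = 0 := by push_cast; ring
        rw [this, zpow_zero, one_mul]
        ring
      rw [hsplit, map_add]
      have ht0 : q (t (n+1)) = 0 := by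
        rw [hq]
        exact (QuotientAddGroup.eq_zero_iff _).mpr (htle (n+1))
      rw [ht0, add_zero]
end

section
/- Let G := ℚ_p × (ℚ_p/ℤ_p), β(x,y) := (p⁻¹x, y + q(p⁻¹x)) and α(x,y) := (p⁻¹x, y). Then for every n ∈ ℕ, α^n(ℤ_p × {0}) ∩ β^n(ℤ_p × {0}) = ℤ_p × {0}. -/
noncomputable def padicC (p : ℕ) [Fact p.Prime] : ℕ → ℚ_[p]
  | 0 => 0
  | n + 1 => (p : ℚ_[p])⁻¹ * (1 + padicC p n)

lemma padicC_norm (p : ℕ) [Fact p.Prime] (n : ℕ) :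
    ‖padicC p (n + 1)‖ = (p : ℝ) ^ (n + 1) := by
  have hp1 : (1 : ℝ) < (p : ℝ) := by exact_mod_cast (Fact.out : p.Prime).one_lt
  have hpinv : ‖((p : ℚ_[p]))⁻¹‖ = (p : ℝ) := by
    rw [norm_inv, Padic.norm_p, inv_inv]
  induction n with
  | zero => simp [padicC, norm_mul, hpinv]
  | succ n ih =>
    have h1 : ‖(1 : ℚ_[p]) + padicC p (n + 1)‖ = (p : ℝ) ^ (n + 1) := by
      have hne : ‖(1 : ℚ_[p])‖ ≠ ‖padicC p (n + 1)‖ := by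
        rw [norm_one, ih]
        exact ne_of_lt (one_lt_pow₀ hp1 (Nat.succ_ne_zero n))
      rw [Padic.add_eq_max_of_ne hne, norm_one, ih,
        max_eq_right (le_of_lt (one_lt_pow₀ hp1 (Nat.succ_ne_zero n)))]
    rw [show padicC p (n + 1 + 1) = (p : ℚ_[p])⁻¹ * (1 + padicC p (n + 1)) from rfl,
      norm_mul, hpinv, h1]
    ring

/-- Let `G := ℚ_p × (ℚ_p/ℤ_p)`, `β(x,y) := (p⁻¹x, y + q(p⁻¹x))`
and `α(x,y) := (p⁻¹x, y)`. Then for every `n ∈ ℕ`,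
`α^n(ℤ_p × {0}) ∩ β^n(ℤ_p × {0}) = ℤ_p × {0}`. -/
theorem stmt9 (p : ℕ) [Fact p.Prime]
    (q : ℚ_[p] →+ ℚ_[p] ⧸ padicIntSubgroup p)
    (hq : q = QuotientAddGroup.mk' (padicIntSubgroup p))
    (α β : ℚ_[p] × (ℚ_[p] ⧸ padicIntSubgroup p) → ℚ_[p] × (ℚ_[p] ⧸ padicIntSubgroup p))
    (hα : ∀ z, α z = ((p : ℚ_[p])⁻¹ * z.1, z.2))
    (hβ : ∀ z, β z = ((p : ℚ_[p])⁻¹ * z.1, z.2 + q ((p : ℚ_[p])⁻¹ * z.1))) :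
    ∀ n : ℕ,
      α^[n] '' ((padicIntSubgroup p : Set ℚ_[p]) ×ˢ ({0} : Set (ℚ_[p] ⧸ padicIntSubgroup p))) ∩
        β^[n] '' ((padicIntSubgroup p : Set ℚ_[p]) ×ˢ ({0} : Set (ℚ_[p] ⧸ padicIntSubgroup p))) =
      (padicIntSubgroup p : Set ℚ_[p]) ×ˢ ({0} : Set (ℚ_[p] ⧸ padicIntSubgroup p)) := by
  intro n
  have hp1 : (1 : ℝ) < (p : ℝ) := by exact_mod_cast (Fact.out : p.Prime).one_lt
  have hp0 : (p : ℚ_[p]) ≠ 0 := by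
    exact_mod_cast (Fact.out : p.Prime).ne_zero
  have hpinv : ‖((p : ℚ_[p]))⁻¹‖ = (p : ℝ) := by
    rw [norm_inv, Padic.norm_p, inv_inv]
  -- membership in subgroup = norm ≤ 1
  have hmem : ∀ x : ℚ_[p], x ∈ padicIntSubgroup p ↔ ‖x‖ ≤ 1 := fun _ => Iff.rfl
  have hq0 : ∀ x : ℚ_[p], q x = 0 ↔ ‖x‖ ≤ 1 := by
    intro x
    rw [hq, QuotientAddGroup.mk'_apply, QuotientAddGroup.eq_zero_iff]
    exact hmem x
  -- iterate formulas
  have hαn : ∀ (m : ℕ) (z : ℚ_[p] × (ℚ_[p] ⧸ padicIntSubgroup p)),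
      α^[m] z = (((p : ℚ_[p])⁻¹) ^ m * z.1, z.2) := by
    intro m
    induction m with
    | zero => intro z; simp
    | succ m ih =>
      intro z
      rw [Function.iterate_succ_apply, ih, hα]
      rw [Prod.mk.injEq]
      exact ⟨by ring, rfl⟩
  have hβn : ∀ (m : ℕ) (z : ℚ_[p] × (ℚ_[p] ⧸ padicIntSubgroup p)),
      β^[m] z = (((p : ℚ_[p])⁻¹) ^ m * z.1, z.2 + q (padicC p m * z.1)) := by
    intro m
    induction m with
    | zero => intro z; simp [padicC]
    | succ m ih =>
      intro z
      rw [Function.iterate_succ_apply, hβ, ih]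
      simp only
      refine Prod.ext ?_ ?_
      · simp only []; ring
      · simp only []
        rw [show padicC p (m + 1) = (p : ℚ_[p])⁻¹ * (1 + padicC p m) from rfl]
        rw [add_assoc, ← map_add]
        congr 1
        ring
  ext z
  obtain ⟨x, y⟩ := z
  simp only [Set.mem_inter_iff, Set.mem_image, Set.mem_prod, Set.mem_singleton_iff,
    SetLike.mem_coe, hmem]
  constructor
  · rintro ⟨⟨⟨a, b⟩, ⟨⟨ha, hb⟩, hab⟩⟩, ⟨⟨c, d⟩, ⟨⟨hc, hd⟩, hcd⟩⟩⟩
    rw [hαn] at hab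
    rw [hβn] at hcd
    subst hb; subst hd
    simp only [Prod.mk.injEq] at hab hcd
    obtain ⟨h1, h2⟩ := hab
    obtain ⟨h3, h4⟩ := hcd
    refine ⟨?_, h2.symm⟩
    have hac : a = c := by
      have := h1.trans h3.symm
      exact mul_left_cancel₀ (pow_ne_zero _ (inv_ne_zero hp0)) this
    subst hac
    rcases Nat.eq_zero_or_pos n with hn | hn
    · subst hn; simp at h1; rwa [← h1]
    · obtain ⟨m, rfl⟩ := Nat.exists_eq_add_of_lt hn
      simp only [Nat.zero_add] at *
      -- z.2 = 0 and q (c_{m+1} a) = 0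
      have hq4 : q (padicC p (m + 1) * a) = 0 := by
        have := h4.trans h2.symm
        -- h4 : 0 + q (...) = y, h2 : y = 0
        rw [zero_add] at this
        exact this
      rw [hq0] at hq4
      rw [norm_mul, padicC_norm] at hq4
      rw [← h1, norm_mul, norm_pow, hpinv]
      exact hq4
  · rintro ⟨hx, hy⟩
    subst hy
    have hpn : ‖((p : ℚ_[p]) ^ n * x)‖ ≤ 1 := by
      rw [norm_mul, Padic.norm_p_pow]
      calc (p : ℝ) ^ (-(n : ℤ)) * ‖x‖ ≤ 1 * 1 := by
            apply mul_le_mul _ hx (norm_nonneg x) zero_le_one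
            exact zpow_le_one_of_nonpos₀ (le_of_lt hp1) (by omega)
        _ = 1 := one_mul 1
    have hx' : ((p : ℚ_[p])⁻¹) ^ n * ((p : ℚ_[p]) ^ n * x) = x := by
      rw [← mul_assoc, inv_pow, inv_mul_cancel₀ (pow_ne_zero _ hp0), one_mul]
    constructor
    · exact ⟨((p : ℚ_[p]) ^ n * x, 0), ⟨hpn, rfl⟩, by rw [hαn]; exact Prod.ext hx' rfl⟩
    · refine ⟨((p : ℚ_[p]) ^ n * x, 0), ⟨hpn, rfl⟩, ?_⟩
      rw [hβn]
      simp only [zero_add]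
      refine Prod.ext hx' ?_
      simp only []
      rw [hq0]
      rcases Nat.eq_zero_or_pos n with hn | hn
      · subst hn; simp [padicC]
      · obtain ⟨m, rfl⟩ := Nat.exists_eq_add_of_lt hn
        simp only [Nat.zero_add]
        rw [← mul_assoc, norm_mul, norm_mul, padicC_norm, Padic.norm_p_pow]
        have : (p : ℝ) ^ (m + 1) * (p : ℝ) ^ (-((m + 1 : ℕ) : ℤ)) = 1 := by
          rw [zpow_neg, zpow_natCast]
          field_simp
        rw [this, one_mul]
        exact hx
end

section
/- Let K := F((X)), O := F[[X]], and define β : K → K by β(z) := X⁻¹z⁽⁴⁾ + X⁻²z⁽⁵⁾ + z⁽⁶⁾, where z⁽⁴⁾ := Σ_{k≥0} a_k X^k, z⁽⁵⁾ := Σ_{k≥0} a_{-(2k+1)} X^{-(2k+1)}, z⁽⁶⁾ := Σ_{k≥1} a_{-2k} X^{-2k}. Then β is an additive automorphism of K, β restricted to O agrees with multiplication by X⁻¹, and for each n ∈ ℕ, β^n(O) = Σ_{k=0}^{n-1} F·X^{-(2k+1)} + O. -/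
open scoped Classical

noncomputable section

variable (F : Type*) [Field F]

/-- The part of a Laurent series supported on `{k | P k}`. -/
def lpart (P : ℤ → Prop) (z : LaurentSeries F) : LaurentSeries F :=
  { coeff := fun k => if P k then z.coeff k else 0,
    isPWO_support' := z.isPWO_support'.mono (fun k hk => by
      by_cases h : P k <;> simp_all [Function.mem_support]) }

variable {F}

lemma lpart_add (P : ℤ → Prop) (a b : LaurentSeries F) :
    lpart F P (a + b) = lpart F P a + lpart F P b := by
  ext k
  simp only [lpart, HahnSeries.coeff_add]
  split <;> simp

variable (F)

/-- The variable `X` of the Laurent series field `K = F((X))`. -/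
def lX : LaurentSeries F := HahnSeries.single 1 1

/-- The ring of formal power series `O = F[[X]]` as an additive subgroup of
`K = F((X))`. -/
def lO : AddSubgroup (LaurentSeries F) where
  carrier := {z | ∀ k < 0, z.coeff k = 0}
  zero_mem' := by intro k _; simp
  add_mem' := by intro a b ha hb k hk; simp [ha k hk, hb k hk]
  neg_mem' := by intro a ha k hk; simp [ha k hk]


/-- `z⁽⁴⁾ := Σ_{k≥0} a_k X^k`, the part of degree `≥ 0`. -/
def part4 (z : LaurentSeries F) : LaurentSeries F := lpart F (fun k => 0 ≤ k) z

/-- `z⁽⁵⁾ := Σ_{k≥0} a_{-(2k+1)} X^{-(2k+1)}`, the negative odd-degree part. -/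
def part5 (z : LaurentSeries F) : LaurentSeries F :=
  lpart F (fun k => k < 0 ∧ Odd k) z

/-- `z⁽⁶⁾ := Σ_{k≥1} a_{-2k} X^{-2k}`, the negative even-degree part. -/
def part6 (z : LaurentSeries F) : LaurentSeries F :=
  lpart F (fun k => k < 0 ∧ Even k) z

/-- The additive endomorphism `β(z) := X⁻¹z⁽⁴⁾ + X⁻²z⁽⁵⁾ + z⁽⁶⁾` of `K`. -/
def betaK : AddMonoid.End (LaurentSeries F) :=
  AddMonoidHom.mk'
    (fun z => (lX F)⁻¹ * part4 F z + ((lX F)⁻¹) ^ 2 * part5 F z + part6 F z)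
    (by
      intro a b
      simp only [part4, part5, part6, lpart_add, mul_add]
      ring)

/-- The one-dimensional subspace `F·X^{-m}` of `K = F((X))`, as an additive
subgroup. -/
def Fline (m : ℕ) : AddSubgroup (LaurentSeries F) :=
  (AddMonoidHom.mk' (fun c : F => HahnSeries.C c * ((lX F)⁻¹) ^ m)
    (by intro a b; simp only [map_add, add_mul])).range

variable {F}

lemma lX_inv : (lX F)⁻¹ = HahnSeries.single (-1 : ℤ) 1 := by
  refine inv_eq_of_mul_eq_one_right ?_
  rw [lX, HahnSeries.single_mul_single]
  norm_num [HahnSeries.single_zero_one]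

lemma lXinv_pow (m : ℕ) : ((lX F)⁻¹) ^ m = HahnSeries.single (-(m : ℤ)) 1 := by
  induction m with
  | zero => simp [HahnSeries.single_zero_one]
  | succ n ih =>
      rw [pow_succ, ih, lX_inv, HahnSeries.single_mul_single, mul_one]
      congr 1
      push_cast
      ring

lemma shift_coeff (m : ℤ) (z : LaurentSeries F) (k : ℤ) :
    (HahnSeries.single m (1 : F) * z).coeff k = z.coeff (k - m) := by
  have h := HahnSeries.coeff_single_mul_add (r := (1 : F)) (x := z) (a := k - m) (b := m)
  rw [sub_add_cancel] at h
  simpa using h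

lemma betaK_coeff (z : LaurentSeries F) (k : ℤ) :
    (betaK F z).coeff k =
      (if 0 ≤ k + 1 then z.coeff (k + 1) else 0)
      + (if k + 2 < 0 ∧ Odd (k + 2) then z.coeff (k + 2) else 0)
      + (if k < 0 ∧ Even k then z.coeff k else 0) := by
  show ((lX F)⁻¹ * part4 F z + ((lX F)⁻¹) ^ 2 * part5 F z + part6 F z).coeff k = _
  rw [HahnSeries.coeff_add, HahnSeries.coeff_add, lXinv_pow 2, lX_inv, shift_coeff, shift_coeff,
    show k - -1 = k + 1 by ring, show k - -(2:ℕ) = k + 2 by push_cast; ring_nf]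
  simp only [part4, part5, part6, lpart]
  congr

def gammaK (w : LaurentSeries F) : LaurentSeries F :=
  { coeff := fun k =>
      if 0 ≤ k then w.coeff (k - 1) else if Odd k then w.coeff (k - 2) else w.coeff k,
    isPWO_support' := by
      have h1 : ((· + (1 : ℤ)) '' w.support).IsPWO :=
        w.isPWO_support'.image_of_monotone (fun a b h => by simpa using h)
      have h2 : ((· + (2 : ℤ)) '' w.support).IsPWO :=
        w.isPWO_support'.image_of_monotone (fun a b h => by simpa using h)
      refine ((h1.union h2).union w.isPWO_support').mono ?_
      intro k hk
      simp only [Function.mem_support] at hk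
      by_cases h0 : 0 ≤ k
      · rw [if_pos h0] at hk
        exact Or.inl (Or.inl ⟨k - 1, hk, by ring⟩)
      · rw [if_neg h0] at hk
        by_cases ho : Odd k
        · rw [if_pos ho] at hk
          exact Or.inl (Or.inr ⟨k - 2, hk, by ring⟩)
        · rw [if_neg ho] at hk
          exact Or.inr hk }

lemma gammaK_coeff (w : LaurentSeries F) (k : ℤ) :
    (gammaK w).coeff k =
      if 0 ≤ k then w.coeff (k - 1) else if Odd k then w.coeff (k - 2) else w.coeff k := rfl

lemma beta_gamma (w : LaurentSeries F) : betaK F (gammaK w) = w := by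
  ext k
  rw [betaK_coeff]
  simp only [gammaK_coeff, Int.odd_iff, Int.even_iff]
  split_ifs <;>
    first
      | (exfalso; omega)
      | (simp only [add_zero, zero_add]; done)
      | (simp only [add_zero, zero_add]; congr 1; omega)
      | (congr 1; omega)

lemma gamma_beta (z : LaurentSeries F) : gammaK (betaK F z) = z := by
  ext k
  simp only [gammaK_coeff, betaK_coeff, Int.odd_iff, Int.even_iff]
  split_ifs <;>
    first
      | (exfalso; omega)
      | (simp only [add_zero, zero_add]; done)
      | (simp only [add_zero, zero_add]; congr 1; omega)
      | (congr 1; omega)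

lemma betaK_bijective : Function.Bijective (betaK F) :=
  ⟨Function.LeftInverse.injective gamma_beta, Function.RightInverse.surjective beta_gamma⟩

lemma betaK_on_O (z : LaurentSeries F) (hz : z ∈ lO F) :
    betaK F z = (lX F)⁻¹ * z := by
  have hz' : ∀ k < 0, z.coeff k = 0 := hz
  ext k
  rw [betaK_coeff, lX_inv, shift_coeff, show k - -1 = k + 1 by ring]
  have e1 : (if 0 ≤ k + 1 then z.coeff (k + 1) else 0) = z.coeff (k + 1) := by
    split_ifs with h
    · rfl
    · exact (hz' _ (by omega)).symm
  have e2 : (if k + 2 < 0 ∧ Odd (k + 2) then z.coeff (k + 2) else 0) = 0 := by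
    split_ifs with h
    · exact hz' _ h.1
    · rfl
  have e3 : (if k < 0 ∧ Even k then z.coeff k else 0) = 0 := by
    split_ifs with h
    · exact hz' _ h.1
    · rfl
  rw [e1, e2, e3, add_zero, add_zero]

lemma Fline_gen (m : ℕ) (c : F) :
    HahnSeries.C c * ((lX F)⁻¹) ^ m = HahnSeries.single (-(m : ℤ)) c := by
  rw [lXinv_pow, HahnSeries.C_apply, HahnSeries.single_mul_single, zero_add, mul_one]

lemma mem_Fline {m : ℕ} {z : LaurentSeries F} :
    z ∈ Fline F m ↔ ∃ c : F, z = HahnSeries.single (-(m : ℤ)) c := by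
  constructor
  · rintro ⟨c, rfl⟩
    exact ⟨c, show HahnSeries.C c * ((lX F)⁻¹) ^ m = _ from Fline_gen m c⟩
  · rintro ⟨c, rfl⟩
    exact ⟨c, show HahnSeries.C c * ((lX F)⁻¹) ^ m = _ from Fline_gen m c⟩

lemma lX_ne_zero : (lX F) ≠ 0 := HahnSeries.single_ne_zero one_ne_zero

lemma beta_single (m : ℕ) (c : F) :
    betaK F (HahnSeries.single (-((2 * m + 1 : ℕ) : ℤ)) c)
      = HahnSeries.single (-((2 * m + 3 : ℕ) : ℤ)) c := by
  ext k
  rw [betaK_coeff]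
  simp only [HahnSeries.coeff_single, Int.odd_iff, Int.even_iff]
  split_ifs <;>
    first
      | (exfalso; omega)
      | (simp only [add_zero, zero_add]; done)
      | omega

lemma map_beta_Fline (m : ℕ) :
    (Fline F (2 * m + 1)).map (betaK F) = Fline F (2 * m + 3) := by
  have hh : ∀ z, @DFunLike.coe (LaurentSeries F →+ LaurentSeries F) _ _ AddMonoidHom.instFunLike (betaK F) z = betaK F z := fun _ => rfl
  ext w
  simp only [AddSubgroup.mem_map, mem_Fline]
  constructor
  · rintro ⟨z, ⟨c, rfl⟩, rfl⟩
    exact ⟨c, by rw [hh, AddMonoidHom.mk'_apply, Fline_gen, beta_single]⟩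
  · rintro ⟨c, rfl⟩
    exact ⟨_, ⟨c, rfl⟩, by rw [hh, AddMonoidHom.mk'_apply, Fline_gen, beta_single]⟩

lemma map_betapow_Fline (n : ℕ) : ∀ m : ℕ,
    (Fline F (2 * m + 1)).map ((betaK F) ^ n : AddMonoid.End _)
      = Fline F (2 * (m + n) + 1) := by
  induction n with
  | zero =>
      intro m
      rw [pow_zero]
      show (Fline F (2 * m + 1)).map (AddMonoidHom.id _) = _
      rw [AddSubgroup.map_id]; norm_num
  | succ n ih =>
      intro m
      rw [pow_succ]
      show (Fline F (2 * m + 1)).map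
        (((betaK F) ^ n : AddMonoid.End _).comp (betaK F)) = _
      erw [← AddSubgroup.map_map, map_beta_Fline,
        show 2 * m + 3 = 2 * (m + 1) + 1 by ring, ih (m + 1),
        show m + 1 + n = m + (n + 1) by ring]

lemma map_beta_O : (lO F).map (betaK F) = Fline F 1 ⊔ lO F := by
  apply le_antisymm
  · rintro w ⟨z, hz, rfl⟩
    have hz' : ∀ k < 0, z.coeff k = 0 := hz
    have hb := betaK_on_O z hz
    have key : betaK F z = HahnSeries.single (-1 : ℤ) (z.coeff 0)
        + (betaK F z - HahnSeries.single (-1 : ℤ) (z.coeff 0)) := by ring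
    erw [key]
    refine AddSubgroup.add_mem _ (AddSubgroup.mem_sup_left ?_)
      (AddSubgroup.mem_sup_right ?_)
    · rw [mem_Fline]
      exact ⟨z.coeff 0, by norm_num⟩
    · intro k hk
      show (betaK F z - _).coeff k = 0
      rw [HahnSeries.coeff_sub, hb, lX_inv, shift_coeff, HahnSeries.coeff_single]
      split_ifs with h
      · rw [show k - -1 = 0 by omega]
        ring
      · rw [hz' _ (by omega), sub_zero]
  · refine sup_le ?_ ?_
    · intro w hw
      rw [mem_Fline] at hw
      obtain ⟨c, rfl⟩ := hw
      have hmem : HahnSeries.single (0 : ℤ) c ∈ lO F := by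
        intro k hk
        exact HahnSeries.coeff_single_of_ne (by omega)
      refine ⟨HahnSeries.single 0 c, hmem, ?_⟩
      erw [betaK_on_O _ hmem, lX_inv, HahnSeries.single_mul_single]
      simp
    · intro z hz
      have hz' : ∀ k < 0, z.coeff k = 0 := hz
      have hmem : lX F * z ∈ lO F := by
        intro k hk
        rw [lX, shift_coeff]
        exact hz' _ (by omega)
      refine ⟨lX F * z, hmem, ?_⟩
      erw [betaK_on_O _ hmem]; rw [← mul_assoc, inv_mul_cancel₀ lX_ne_zero, one_mul]

/-- Let `K := F((X))`, `O := F[[X]]` and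
`β(z) := X⁻¹z⁽⁴⁾ + X⁻²z⁽⁵⁾ + z⁽⁶⁾`.  Then `β` is an additive automorphism of
`K`, it agrees with multiplication by `X⁻¹` on `O`, and for each `n`,
`β^n(O) = Σ_{k=0}^{n-1} F·X^{-(2k+1)} + O`. -/
theorem stmt12 (F : Type*) [Field F] [Fintype F] :
    Function.Bijective (betaK F) ∧
      (∀ z ∈ lO F, betaK F z = (lX F)⁻¹ * z) ∧
      ∀ n : ℕ, (lO F).map ((betaK F) ^ n : AddMonoid.End _) =
        (⨆ k ∈ Finset.range n, Fline F (2 * k + 1)) ⊔ lO F := by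
  refine ⟨betaK_bijective, fun z hz => betaK_on_O z hz, ?_⟩
  intro n
  induction n with
  | zero =>
      rw [pow_zero]
      show (lO F).map (AddMonoidHom.id _) = _
      rw [AddSubgroup.map_id]
      simp
  | succ n ih =>
      have h1 := map_betapow_Fline (F := F) n 0
      norm_num at h1
      rw [pow_succ]
      show (lO F).map (((betaK F) ^ n : AddMonoid.End _).comp (betaK F)) = _
      erw [← AddSubgroup.map_map]; rw [map_beta_O]; erw [AddSubgroup.map_sup]; rw [h1, ih,
        Finset.range_add_one, Finset.iSup_insert, sup_assoc]

end
end

section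
/- Let J be an infinite set, F a nontrivial finite group, G := F^J with the product topology, and π : Sym(J) → Aut(G) the permutation action π(σ)(f)(j) := f(σ⁻¹(j)). Let H ≤ Sym(J) be a subgroup all of whose orbits on J are infinite. If U ⊆ G is an open subgroup with π(σ)(U) = U for all σ ∈ H, then U = G. -/
/-- Let `J` be an infinite set, `F` a nontrivial finite group,
`G := F^J` with the product topology, and `π : Sym(J) → Aut(G)` the permutation
action `π(σ)(f)(j) := f(σ⁻¹(j))`.  Let `H ≤ Sym(J)` be a subgroup all of whose
orbits on `J` are infinite.  If `U ⊆ G` is an open subgroup with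
`π(σ)(U) = U` for all `σ ∈ H`, then `U = G`. -/
theorem stmt14 (J : Type*) [Infinite J] (F : Type*) [Group F] [Finite F]
    [Nontrivial F] [TopologicalSpace F] [DiscreteTopology F]
    (H : Subgroup (Equiv.Perm J))
    (horb : ∀ k : J, {j : J | ∃ σ ∈ H, σ k = j}.Infinite)
    (U : Subgroup (J → F)) (hUopen : IsOpen (U : Set (J → F)))
    (hUinv : ∀ σ ∈ H, (fun f : J → F => fun j => f (σ⁻¹ j)) '' U = U) :
    U = ⊤ := by
  classical
  obtain ⟨I, t, ht, hIt⟩ := isOpen_pi_iff.mp hUopen 1 (one_mem U)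
  have hbasic : ∀ f : J → F, (∀ j ∈ I, f j = 1) → f ∈ U := by
    intro f hf
    apply hIt
    intro j hj
    rw [hf j hj]
    exact (ht j hj).2
  have hsingle : ∀ (j : J) (x : F), Pi.mulSingle j x ∈ U := by
    intro j x
    obtain ⟨k, hkorb, hkI⟩ := ((horb j).diff I.finite_toSet).nonempty
    obtain ⟨σ, hσ, hσj⟩ := hkorb
    have hk : Pi.mulSingle k x ∈ U := hbasic _ (fun j' hj' => by
      apply Pi.mulSingle_eq_of_ne
      rintro rfl; exact hkI hj')
    have hinv := hUinv σ⁻¹ (H.inv_mem hσ)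
    have hmem : (fun j' => (Pi.mulSingle k x : J → F) ((σ⁻¹)⁻¹ j')) ∈ U := by
      rw [← SetLike.mem_coe, ← hinv]; exact ⟨_, hk, rfl⟩
    have heq : (fun j' => (Pi.mulSingle k x : J → F) ((σ⁻¹)⁻¹ j')) = Pi.mulSingle j x := by
      funext j'
      rw [inv_inv]
      rcases eq_or_ne j' j with rfl | h
      · rw [hσj, Pi.mulSingle_eq_same, Pi.mulSingle_eq_same]
      · rw [Pi.mulSingle_eq_of_ne h, Pi.mulSingle_eq_of_ne]
        intro hc; exact h (σ.injective (hc.trans hσj.symm))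
    rwa [heq] at hmem
  have hsupp : ∀ (s : Finset J) (f : J → F), (∀ j ∉ s, f j = 1) → f ∈ U := by
    intro s
    induction s using Finset.induction with
    | empty =>
      intro f hf
      have : f = 1 := funext fun j => hf j (by simp)
      rw [this]; exact one_mem U
    | insert a s ha ih =>
      intro f hf
      have hdec : f = Pi.mulSingle a (f a) * Function.update f a 1 := by
        funext j
        rcases eq_or_ne j a with rfl | h
        · simp
        · simp [Pi.mulSingle_eq_of_ne h, Function.update_of_ne h]
      rw [hdec]
      refine mul_mem (hsingle _ _) (ih _ ?_)
      intro j hj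
      rcases eq_or_ne j a with rfl | h
      · simp
      · rw [Function.update_of_ne h]
        exact hf j (by simp [hj, h])
  ext f
  simp only [Subgroup.mem_top, iff_true]
  have hdec : f = (fun j => if j ∈ I then (1 : F) else f j) *
      (fun j => if j ∈ I then f j else 1) := by
    funext j
    by_cases h : j ∈ I <;> simp [h]
  rw [hdec]
  refine mul_mem (hbasic _ fun j hj => by simp [hj]) (hsupp I _ ?_)
  intro j hj
  simp [hj]
end
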